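/- Let R be a commutative ring, A a commutative R-algebra, and F : ℕ → Submodule R A a multiplicative filtration: 1 ∈ F 0, F is monotone (F d ≤ F (d+1) for all d), and F i * F j ≤ F (i+j) for all i, j. Let ^hA := {p ∈ Polynomial A | ∀ d, p.coeff d ∈ F d}, an R-subalgebra of Polynomial A containing X. Let s be a natural number and S an A-subalgebra of the product ring Fin s → A (pointwise operations, containing the diagonal copy of A). Define ^hS := {p : Fin s → Polynomial A | ∀ d, (fun i => (p i).coeff d) ∈ S and (p i).coeff d ∈ F d for all i}. Then ^hS contains the diagonal image of ^hA in Fin s → Polynomial A and is closed under pointwise multiplication; i.e., ^hS is an ^hA-subalgebra of (Fin s → Polynomial A). -/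

import Mathlib

/-- Let `F` be a multiplicative filtration of a commutative `R`-algebra `A`,
`^hA = {p ∈ A[X] | ∀ d, p.coeff d ∈ F d}` the homogenization, and `S` an `A`-subalgebra of
the product ring `Fin s → A`.  Then the Billera–Rose homogenization
`^hS = {p : Fin s → A[X] | ∀ d, the tuple of degree-d coefficients lies in S and in F d}`
contains the diagonal image of `^hA` and is closed under pointwise addition and
multiplication; i.e. `^hS` is an `^hA`-subalgebra of `Fin s → A[X]`. -/
theorem stmt_9 {R A : Type*} [CommRing R] [CommRing A] [Algebra R A]
    (F : ℕ → Submodule R A) (h1 : (1 : A) ∈ F 0) (hmono : ∀ d, F d ≤ F (d + 1))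
    (hmul : ∀ i j, F i * F j ≤ F (i + j))
    (s : ℕ) (S : Subalgebra A (Fin s → A)) :
    let hA : Set (Polynomial A) := {p | ∀ d, p.coeff d ∈ F d}
    let hS : Set (Fin s → Polynomial A) :=
      {p | ∀ d, ((fun i => (p i).coeff d) : Fin s → A) ∈ S ∧ ∀ i, (p i).coeff d ∈ F d}
    (∀ q ∈ hA, ((fun _ => q) : Fin s → Polynomial A) ∈ hS) ∧
    (∀ p q : Fin s → Polynomial A, p ∈ hS → q ∈ hS → p + q ∈ hS) ∧
    (∀ p q : Fin s → Polynomial A, p ∈ hS → q ∈ hS → p * q ∈ hS) := by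
  intro hA hS
  refine ⟨?_, ?_, ?_⟩
  · intro q hq d
    refine ⟨?_, fun i => hq d⟩
    have : ((fun _ => q.coeff d) : Fin s → A) = algebraMap A (Fin s → A) (q.coeff d) := rfl
    rw [this]
    exact S.algebraMap_mem _
  · intro p q hp hq d
    refine ⟨?_, fun i => ?_⟩
    · have : ((fun i => ((p + q) i).coeff d) : Fin s → A)
          = (fun i => (p i).coeff d) + (fun i => (q i).coeff d) := by
        funext i; simp [Polynomial.coeff_add]
      rw [this]
      exact S.add_mem (hp d).1 (hq d).1
    · simpa [Polynomial.coeff_add] using (F d).add_mem ((hp d).2 i) ((hq d).2 i)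
  · intro p q hp hq d
    refine ⟨?_, fun i => ?_⟩
    · have : ((fun i => ((p * q) i).coeff d) : Fin s → A)
          = ∑ x ∈ Finset.HasAntidiagonal.antidiagonal d,
              ((fun i => (p i).coeff x.1) * (fun i => (q i).coeff x.2)) := by
        funext i
        simp [Polynomial.coeff_mul, Finset.sum_apply]
      rw [this]
      exact S.sum_mem fun x _ => S.mul_mem (hp x.1).1 (hq x.2).1
    · rw [Pi.mul_apply, Polynomial.coeff_mul]
      refine (F d).sum_mem fun x hx => ?_
      have := hmul x.1 x.2 (Submodule.mul_mem_mul ((hp x.1).2 i) ((hq x.2).2 i))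
      rwa [(Finset.HasAntidiagonal.mem_antidiagonal.mp hx)] at this
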